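/- Let A > 1 be an integer and define c_k = (2/A^k) ∑_{w ∈ [A]^k} log(val(w)) for k ≥ 1. Then for all integers j ≥ k ≥ 1 one has |c_k − c_j| ≤ 2/F_k², where F_k is the k-th Fibonacci number (F_1 = F_2 = 1). In particular, the sequence (c_k) is Cauchy and converges to a real limit. -/

import Mathlib

open Filter

namespace Winding

/-- Words of length `n` over the alphabet `{1,…,A}`; the `i`-th letter is `(α i).1 + 1`. -/
abbrev Word (A n : ℕ) : Type := Fin n → Fin A

/-- The `i`-th partial quotient `a_{i+1} ∈ {1,…,A}` of a word. -/
def letter {A n : ℕ} (α : Word A n) (i : Fin n) : ℕ := (α i).1 + 1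

/-- `α` has period `d`: `d` is a positive divisor of `n` and `a_i = a_{i+d}` whenever in range. -/
def HasPeriod {A n : ℕ} (α : Word A n) (d : ℕ) : Prop :=
  0 < d ∧ d ∣ n ∧
    ∀ (i : ℕ) (h : i + d < n),
      α ⟨i, Nat.lt_of_le_of_lt (Nat.le_add_right i d) h⟩ = α ⟨i + d, h⟩

/-- The minimal period of a word. -/
noncomputable def mp {A n : ℕ} (α : Word A n) : ℕ := sInf {d | HasPeriod α d}

/-- A word of even length `n` is primitive if `mp α = n`, or `n/2` is odd and `mp α = n/2`. -/
def Primitive {A n : ℕ} (α : Word A n) : Prop :=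
  mp α = n ∨ (Odd (n / 2) ∧ mp α = n / 2)

/-- Cyclic shift of a word by `s` positions. -/
def shift {A n : ℕ} (s : ℕ) (α : Word A n) : Word A n :=
  fun i => α ⟨(i.1 + s) % n, Nat.mod_lt _ i.pos⟩

/-- Even cyclic shift relation. -/
def ShiftRel (A n : ℕ) (α β : Word A n) : Prop :=
  ∃ s : ℕ, Even s ∧ β = shift s α

/-- Primitive words of length `n`. -/
def PrimWord (A n : ℕ) : Type := {α : Word A n // Primitive α}

instance {A n : ℕ} : Finite (PrimWord A n) := by unfold PrimWord; infer_instance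

/-- `P_n`: equivalence classes of primitive words of length `n` under even cyclic shifts. -/
def GeodClass (A n : ℕ) : Type :=
  Quot (fun α β : PrimWord A n => ShiftRel A n α.1 β.1)

instance {A n : ℕ} : Finite (GeodClass A n) :=
  Finite.of_surjective _ (Quot.mk_surjective)

instance (N : ℕ) : Finite {n : ℕ // n ≤ N ∧ Even n} :=
  Finite.of_injective (fun x => (⟨x.1, Nat.lt_succ_of_le x.2.1⟩ : Fin (N + 1)))
    fun x y h => Subtype.ext (by simpa using congrArg Fin.val h)

/-- `Π_A(N)`: the disjoint union of the `P_n` over even `n ≤ N`. -/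
def Geod (A N : ℕ) : Type := Σ n : {n : ℕ // n ≤ N ∧ Even n}, GeodClass A n.1

instance {A N : ℕ} : Finite (Geod A N) := by unfold Geod; infer_instance

/-- `π_A(N) = |Π_A(N)|`. -/
noncomputable def piA (A N : ℕ) : ℕ := Nat.card (Geod A N)

/-- The winding number `Ψ(α) = a_1 - a_2 + a_3 - ⋯ - a_n`. -/
def winding {A n : ℕ} (α : Word A n) : ℤ :=
  ∑ i : Fin n, (-1) ^ (i : ℕ) * (letter α i : ℤ)

/-- Winding number of a closed geodesic (well defined on classes since `Ψ` is invariant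
under even cyclic shifts; here computed on a choice of representative). -/
noncomputable def windingG {A N : ℕ} (C : Geod A N) : ℤ := winding C.2.out.1

/-- Period length `ℓ_p` of a closed geodesic. -/
def plenG {A N : ℕ} (C : Geod A N) : ℕ := C.1.1

/-- Word length `ℓ_w(α) = 2 ∑ a_i`. -/
def wlen {A n : ℕ} (α : Word A n) : ℕ := 2 * ∑ i : Fin n, letter α i

/-- Word length of a closed geodesic. -/
noncomputable def wlenG {A N : ℕ} (C : Geod A N) : ℕ := wlen C.2.out.1

/-- Value of a finite continued fraction `b_1 + 1/(b_2 + 1/(⋯ + 1/b_k))`. -/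
noncomputable def cfVal : List ℕ → ℝ
  | [] => 0
  | b :: l => b + 1 / cfVal l

/-- The block `l` repeated `m` times. -/
def repBlock (l : List ℕ) : ℕ → List ℕ
  | 0 => []
  | m + 1 => l ++ repBlock l m

/-- Value of the purely periodic continued fraction with repeating block `l`:
the limit of the values of the finite continued fractions obtained by repeating `l`. -/
noncomputable def periodicVal (l : List ℕ) : ℝ :=
  limUnder atTop fun m => cfVal (repBlock l m)

/-- The list of partial quotients of a word. -/
def toList {A n : ℕ} (α : Word A n) : List ℕ := List.ofFn (letter α)

/-- `T^j ᾱ`: the purely periodic continued fraction whose repeating block is the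
cyclic shift of `α` by `j`. -/
noncomputable def Tpow {A n : ℕ} (α : Word A n) (j : ℕ) : ℝ :=
  periodicVal (toList (shift j α))

/-- Geometric length `ℓ_g(α) = 2 ∑_{j=1}^n log (T^j ᾱ)`. -/
noncomputable def glen {A n : ℕ} (α : Word A n) : ℝ :=
  2 * ∑ j : Fin n, Real.log (Tpow α (j.1 + 1))

/-- Geometric length of a closed geodesic. -/
noncomputable def glenG {A N : ℕ} (C : Geod A N) : ℝ := glen C.2.out.1


-- ===== Auxiliary lemmas for stmt17 =====

noncomputable def gval : List ℕ → ℝ → ℝ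
  | [], u => u
  | [b], u => (b : ℝ) + u
  | b :: c :: l, u => (b : ℝ) + 1 / gval (c :: l) u

lemma cfVal_nonneg : ∀ l : List ℕ, 0 ≤ cfVal l
  | [] => by simp [cfVal]
  | b :: l => by
      have h := cfVal_nonneg l
      simp only [cfVal]
      positivity

lemma cfVal_ge_one : ∀ l : List ℕ, l ≠ [] → (∀ b ∈ l, 1 ≤ b) → 1 ≤ cfVal l
  | [], h, _ => absurd rfl h
  | b :: l, _, hb => by
      have h1 : 1 ≤ b := hb b List.mem_cons_self
      have h2 := cfVal_nonneg l
      have h3 : (1:ℝ) ≤ (b:ℝ) := by exact_mod_cast h1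
      have h4 : (0:ℝ) ≤ 1 / cfVal l := by positivity
      simp only [cfVal]
      linarith

lemma cfVal_append : ∀ l m : List ℕ, l ≠ [] → cfVal (l ++ m) = gval l (1 / cfVal m)
  | [], _, h => absurd rfl h
  | [b], m, _ => by simp [cfVal, gval]
  | b :: c :: l, m, _ => by
      have ih := cfVal_append (c :: l) m (by simp)
      simp only [List.cons_append] at ih ⊢
      rw [cfVal, gval, ← ih]

lemma gval_zero (l : List ℕ) (hl : l ≠ []) : gval l 0 = cfVal l := by
  have := cfVal_append l [] hl
  simp [cfVal] at this
  exact this.symm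

lemma gval_matrix : ∀ l : List ℕ, l ≠ [] → (∀ b ∈ l, 1 ≤ b) →
    ∃ P R Q S : ℕ, Nat.fib l.length ≤ S ∧ Nat.fib (l.length + 1) ≤ R ∧
      ((P : ℤ) * S - R * Q = 1 ∨ (P : ℤ) * S - R * Q = -1) ∧
      ∀ u : ℝ, 0 ≤ u → gval l u = (P * u + R) / (Q * u + S)
  | [], h, _ => absurd rfl h
  | [b], _, hb => by
      refine ⟨1, b, 0, 1, by simp, by simpa using hb b (by simp),
        by left; push_cast; ring, ?_⟩
      intro u hu
      simp [gval, add_comm]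
  | b :: c :: l, _, hb => by
      obtain ⟨P, R, Q, S, hS, hR, hdet, hval⟩ :=
        gval_matrix (c :: l) (by simp) (fun x hx => hb x (List.mem_cons_of_mem b hx))
      have hb1 : 1 ≤ b := hb b List.mem_cons_self
      have hlen : 1 ≤ (c :: l).length := by simp
      have hfibpos : 1 ≤ Nat.fib (c :: l).length := Nat.fib_pos.mpr hlen
      have hR1 : 1 ≤ R := le_trans (Nat.fib_pos.mpr (by omega)) hR
      refine ⟨b * P + Q, b * R + S, P, R, ?_, ?_, ?_, ?_⟩
      · simpa using hR
      · have h5 : Nat.fib ((b :: c :: l).length + 1)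
            = Nat.fib ((c :: l).length) + Nat.fib ((c :: l).length + 1) := by
          simp [List.length_cons, Nat.fib_add_two]
        rw [h5]
        calc Nat.fib ((c :: l).length) + Nat.fib ((c :: l).length + 1)
            ≤ S + R := Nat.add_le_add hS hR
          _ ≤ b * R + S := by nlinarith
      · rcases hdet with h | h
        · right; push_cast; nlinarith
        · left; push_cast; nlinarith
      · intro u hu
        have hSpos : (0:ℝ) < Q * u + S := by
          have : (1:ℝ) ≤ (S:ℝ) := by exact_mod_cast le_trans hfibpos hS
          positivity
        have hRpos : (0:ℝ) < (P:ℝ) * u + R := by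
          have : (1:ℝ) ≤ (R:ℝ) := by exact_mod_cast hR1
          positivity
        rw [gval, hval u hu]
        rw [one_div_div]
        push_cast
        field_simp
        ring

lemma gval_diff (l : List ℕ) (hl : l ≠ []) (hb : ∀ b ∈ l, 1 ≤ b)
    {u v : ℝ} (hu0 : 0 ≤ u) (hu1 : u ≤ 1) (hv0 : 0 ≤ v) (hv1 : v ≤ 1) :
    |gval l u - gval l v| ≤ 1 / (Nat.fib l.length : ℝ) ^ 2 := by
  obtain ⟨P, R, Q, S, hS, hR, hdet, hval⟩ := gval_matrix l hl hb
  have hlen : 0 < l.length := List.length_pos_iff.mpr hl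
  have hfib : 1 ≤ Nat.fib l.length := Nat.fib_pos.mpr hlen
  have hSr : (1:ℝ) ≤ (S:ℝ) := by exact_mod_cast le_trans hfib hS
  have hfibS : ((Nat.fib l.length : ℝ)) ≤ (S:ℝ) := by exact_mod_cast hS
  have hfibr : (1:ℝ) ≤ (Nat.fib l.length : ℝ) := by exact_mod_cast hfib
  have hx : (0:ℝ) < (Q:ℝ) * u + S := by positivity
  have hy : (0:ℝ) < (Q:ℝ) * v + S := by positivity
  rw [hval u hu0, hval v hv0]
  have key : ((P:ℝ) * u + R) / ((Q:ℝ) * u + S) - ((P:ℝ) * v + R) / ((Q:ℝ) * v + S)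
      = ((P:ℝ) * S - R * Q) * (u - v) / (((Q:ℝ) * u + S) * ((Q:ℝ) * v + S)) := by
    field_simp
    ring
  rw [key]
  have habs : |(P:ℝ) * S - (R:ℝ) * Q| = 1 := by
    rcases hdet with h | h
    · have : ((P:ℝ) * S - (R:ℝ) * Q) = 1 := by
        exact_mod_cast congrArg (fun z : ℤ => (z : ℝ)) h
      rw [this]; norm_num
    · have : ((P:ℝ) * S - (R:ℝ) * Q) = -1 := by
        exact_mod_cast congrArg (fun z : ℤ => (z : ℝ)) h
      rw [this]; norm_num
  rw [abs_div, abs_mul, habs, one_mul, abs_of_pos (mul_pos hx hy)]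
  have h1 : |u - v| ≤ 1 := by rw [abs_sub_le_iff]; constructor <;> linarith
  have h2 : ((Nat.fib l.length : ℝ)) ^ 2 ≤ ((Q:ℝ) * u + S) * ((Q:ℝ) * v + S) := by
    nlinarith [mul_nonneg (Nat.cast_nonneg (α := ℝ) Q) hu0,
      mul_nonneg (Nat.cast_nonneg (α := ℝ) Q) hv0]
  exact div_le_div₀ zero_le_one h1 (by positivity) h2

lemma cfVal_prefix_diff (l m : List ℕ) (hl : l ≠ []) (hbl : ∀ b ∈ l, 1 ≤ b)
    (hbm : ∀ b ∈ m, 1 ≤ b) :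
    |cfVal (l ++ m) - cfVal l| ≤ 1 / (Nat.fib l.length : ℝ) ^ 2 := by
  rw [cfVal_append l m hl, ← gval_zero l hl]
  have h0 : (0:ℝ) ≤ 1 / cfVal m := by
    have := cfVal_nonneg m
    positivity
  have h1 : 1 / cfVal m ≤ 1 := by
    rcases eq_or_ne m [] with rfl | hm
    · simp [cfVal]
    · have := cfVal_ge_one m hm hbm
      rw [div_le_one (by linarith)]
      linarith
  exact gval_diff l hl hbl h0 h1 le_rfl zero_le_one

lemma abs_log_sub_le {a b : ℝ} (ha : 1 ≤ a) (hb : 1 ≤ b) :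
    |Real.log a - Real.log b| ≤ |a - b| := by
  wlog h : b ≤ a generalizing a b
  · rw [abs_sub_comm, abs_sub_comm a b]
    exact this hb ha (le_of_not_ge h)
  have hb0 : (0:ℝ) < b := by linarith
  have ha0 : (0:ℝ) < a := by linarith
  have hlog : Real.log a - Real.log b = Real.log (a / b) :=
    (Real.log_div (by linarith) (by linarith)).symm
  have hge : (1:ℝ) ≤ a / b := (one_le_div hb0).mpr h
  rw [hlog, abs_of_nonneg (Real.log_nonneg hge), abs_of_nonneg (by linarith : (0:ℝ) ≤ a - b)]
  have h2 : Real.log (a / b) ≤ a / b - 1 := Real.log_le_sub_one_of_pos (by positivity)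
  have h3 : a / b - 1 = (a - b) / b := by field_simp
  have h4 : (a - b) / b ≤ a - b := div_le_self (by linarith) hb
  linarith

lemma toList_mem {A n : ℕ} (α : Word A n) : ∀ b ∈ toList α, 1 ≤ b := by
  intro b hb
  simp only [toList, List.mem_ofFn] at hb
  obtain ⟨i, rfl⟩ := hb
  simp [letter]

lemma toList_length {A n : ℕ} (α : Word A n) : (toList α).length = n := by
  simp [toList]

lemma toList_ne_nil {A n : ℕ} (hn : 1 ≤ n) (α : Word A n) : toList α ≠ [] := by
  intro h
  have := toList_length α
  rw [h] at this
  simp at this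
  omega

lemma toList_fin_append {A k m : ℕ} (u : Word A k) (v : Word A m) :
    toList (Fin.append u v : Word A (k + m)) = toList u ++ toList v := by
  unfold toList
  rw [← List.ofFn_fin_append]
  congr 1
  funext i
  induction i using Fin.addCases with
  | left i => simp [letter, Fin.append_left]
  | right i => simp [letter, Fin.append_right]

lemma nat_le_two_mul_fib : ∀ n : ℕ, n ≤ 2 * Nat.fib (n + 1)
  | 0 => by simp
  | 1 => by simp [Nat.fib]
  | n + 2 => by
      have ih : n + 1 ≤ 2 * Nat.fib (n + 2) := nat_le_two_mul_fib (n + 1)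
      have h1 : 1 ≤ Nat.fib (n + 1) := Nat.fib_pos.mpr (by omega)
      have h2 : Nat.fib (n + 3) = Nat.fib (n + 1) + Nat.fib (n + 2) := by
        rw [Nat.fib_add_two]
      show n + 2 ≤ 2 * Nat.fib (n + 3)
      omega


-- STATEMENT 17
theorem stmt17 (A : ℕ) (hA : 1 < A) :
    (∀ k j : ℕ, 1 ≤ k → k ≤ j →
        |2 / (A : ℝ) ^ k * ∑ w : Word A k, Real.log (cfVal (toList w)) -
            2 / (A : ℝ) ^ j * ∑ w : Word A j, Real.log (cfVal (toList w))| ≤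
          2 / (Nat.fib k : ℝ) ^ 2) ∧
      ∃ L : ℝ,
        Tendsto
          (fun k : ℕ => 2 / (A : ℝ) ^ k * ∑ w : Word A k, Real.log (cfVal (toList w)))
          atTop (nhds L) := by
  have hA0 : (0:ℝ) < (A:ℝ) := by exact_mod_cast Nat.lt_of_lt_of_le Nat.zero_lt_one hA.le
  have main : ∀ k j : ℕ, 1 ≤ k → k ≤ j →
      |2 / (A : ℝ) ^ k * ∑ w : Word A k, Real.log (cfVal (toList w)) -
          2 / (A : ℝ) ^ j * ∑ w : Word A j, Real.log (cfVal (toList w))| ≤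
        2 / (Nat.fib k : ℝ) ^ 2 := by
    intro k j hk hkj
    obtain ⟨m, rfl⟩ := Nat.exists_eq_add_of_le hkj
    have hfibk : 1 ≤ Nat.fib k := Nat.fib_pos.mpr hk
    have hF1 : (1:ℝ) ≤ (Nat.fib k : ℝ) := by exact_mod_cast hfibk
    -- per-word estimate
    have key : ∀ (u : Word A k) (v : Word A m),
        |Real.log (cfVal (toList u)) -
            Real.log (cfVal (toList (Fin.append u v : Word A (k + m))))| ≤
          1 / (Nat.fib k : ℝ) ^ 2 := by
      intro u v
      have hlu : toList u ≠ [] := toList_ne_nil hk u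
      have h1 : 1 ≤ cfVal (toList u) := cfVal_ge_one _ hlu (toList_mem u)
      have happ := toList_fin_append u v
      have h2 : 1 ≤ cfVal (toList (Fin.append u v : Word A (k + m))) := by
        rw [happ]
        refine cfVal_ge_one _ (by simp [hlu]) ?_
        intro b hb
        rcases List.mem_append.mp hb with h | h
        · exact toList_mem u b h
        · exact toList_mem v b h
      calc |Real.log (cfVal (toList u)) -
              Real.log (cfVal (toList (Fin.append u v : Word A (k + m))))|
          ≤ |cfVal (toList u) - cfVal (toList (Fin.append u v : Word A (k + m)))| :=
            abs_log_sub_le h1 h2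
        _ = |cfVal (toList u ++ toList v) - cfVal (toList u)| := by
            rw [happ, abs_sub_comm]
        _ ≤ 1 / (Nat.fib (toList u).length : ℝ) ^ 2 :=
            cfVal_prefix_diff _ _ hlu (toList_mem u) (toList_mem v)
        _ = 1 / (Nat.fib k : ℝ) ^ 2 := by rw [toList_length]
    -- rewrite the sum over words of length k + m
    have hsum : ∑ w : Word A (k + m), Real.log (cfVal (toList w))
        = ∑ u : Word A k, ∑ v : Word A m,
            Real.log (cfVal (toList (Fin.append u v : Word A (k + m)))) := by
      have e1 : ∑ p : Word A k × Word A m,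
          Real.log (cfVal (toList (Fin.append p.1 p.2 : Word A (k + m))))
          = ∑ w : Word A (k + m), Real.log (cfVal (toList w)) :=
        Fintype.sum_equiv (Fin.appendEquiv k m) _ _ (fun p => rfl)
      rw [← e1, Fintype.sum_prod_type]
    have hcardm : (Fintype.card (Word A m) : ℝ) = (A:ℝ) ^ m := by
      simp [Fintype.card_fun]
    have hcardk : (Fintype.card (Word A k) : ℝ) = (A:ℝ) ^ k := by
      simp [Fintype.card_fun]
    have hck : 2 / (A : ℝ) ^ k * ∑ u : Word A k, Real.log (cfVal (toList u))
        = 2 / (A : ℝ) ^ (k + m) *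
            ∑ u : Word A k, ∑ v : Word A m, Real.log (cfVal (toList u)) := by
      have h1 : ∑ u : Word A k, ∑ v : Word A m, Real.log (cfVal (toList u))
          = (A:ℝ) ^ m * ∑ u : Word A k, Real.log (cfVal (toList u)) := by
        simp only [Finset.sum_const, Finset.card_univ, nsmul_eq_mul, ← Finset.mul_sum]
        rw [hcardm]
      rw [h1, pow_add]
      have hAk : ((A:ℝ)) ^ k ≠ 0 := by positivity
      have hAm : ((A:ℝ)) ^ m ≠ 0 := by positivity
      field_simp
    rw [hck, hsum]
    rw [← mul_sub, abs_mul]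
    have hdiff : |(∑ u : Word A k, ∑ v : Word A m, Real.log (cfVal (toList u))) -
        ∑ u : Word A k, ∑ v : Word A m,
          Real.log (cfVal (toList (Fin.append u v : Word A (k + m))))| ≤
        (A:ℝ) ^ (k + m) * (1 / (Nat.fib k : ℝ) ^ 2) := by
      rw [← Finset.sum_sub_distrib]
      refine le_trans (Finset.abs_sum_le_sum_abs _ _) ?_
      have step : ∀ u : Word A k, u ∈ Finset.univ →
          |(∑ v : Word A m, Real.log (cfVal (toList u))) -
              ∑ v : Word A m,
                Real.log (cfVal (toList (Fin.append u v : Word A (k + m))))| ≤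
            (A:ℝ) ^ m * (1 / (Nat.fib k : ℝ) ^ 2) := by
        intro u _
        rw [← Finset.sum_sub_distrib]
        refine le_trans (Finset.abs_sum_le_sum_abs _ _) ?_
        refine le_trans (Finset.sum_le_sum fun v _ => key u v) ?_
        rw [Finset.sum_const, Finset.card_univ, nsmul_eq_mul, hcardm]
      refine le_trans (Finset.sum_le_sum step) ?_
      rw [Finset.sum_const, Finset.card_univ, nsmul_eq_mul, hcardk, pow_add]
      rw [mul_assoc]
    calc |2 / (A : ℝ) ^ (k + m)| *
          |(∑ u : Word A k, ∑ v : Word A m, Real.log (cfVal (toList u))) -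
            ∑ u : Word A k, ∑ v : Word A m,
              Real.log (cfVal (toList (Fin.append u v : Word A (k + m))))|
        ≤ |2 / (A : ℝ) ^ (k + m)| * ((A:ℝ) ^ (k + m) * (1 / (Nat.fib k : ℝ) ^ 2)) :=
          mul_le_mul_of_nonneg_left hdiff (abs_nonneg _)
      _ = 2 / (Nat.fib k : ℝ) ^ 2 := by
          rw [abs_of_pos (by positivity)]
          have hAkm : ((A:ℝ)) ^ (k + m) ≠ 0 := by positivity
          field_simp
  refine ⟨main, ?_⟩
  have hcauchy : CauchySeq (fun n : ℕ =>
      2 / (A : ℝ) ^ (n + 1) * ∑ w : Word A (n + 1), Real.log (cfVal (toList w))) := by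
    apply cauchySeq_of_le_tendsto_0 (fun N => 2 / (Nat.fib (N + 1) : ℝ) ^ 2)
    · intro n m N hn hm
      have hb : ∀ p q : ℕ, N ≤ p → p ≤ q →
          dist (2 / (A : ℝ) ^ (p + 1) * ∑ w : Word A (p + 1), Real.log (cfVal (toList w)))
            (2 / (A : ℝ) ^ (q + 1) * ∑ w : Word A (q + 1), Real.log (cfVal (toList w))) ≤
          2 / (Nat.fib (N + 1) : ℝ) ^ 2 := by
        intro p q hNp hpq
        rw [Real.dist_eq]
        refine le_trans (main (p + 1) (q + 1) (by omega) (by omega)) ?_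
        have h1 : Nat.fib (N + 1) ≤ Nat.fib (p + 1) := Nat.fib_mono (by omega)
        have h2 : (0:ℝ) < (Nat.fib (N + 1) : ℝ) := by
          exact_mod_cast Nat.fib_pos.mpr (by omega)
        gcongr
      rcases le_total n m with h | h
      · exact hb n m hn h
      · rw [dist_comm]; exact hb m n hm h
    · have h1 : Tendsto (fun N : ℕ => (Nat.fib (N + 1) : ℝ)) atTop atTop := by
        have h0 : Tendsto (fun n : ℕ => (n : ℝ) / 2) atTop atTop :=
          Tendsto.atTop_div_const two_pos tendsto_natCast_atTop_atTop
        apply tendsto_atTop_mono _ h0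
        intro n
        have h2 : (n:ℝ) ≤ 2 * (Nat.fib (n + 1) : ℝ) := by
          exact_mod_cast nat_le_two_mul_fib n
        linarith
      have h2 : Tendsto (fun N : ℕ => ((Nat.fib (N + 1) : ℝ)) ^ 2) atTop atTop :=
        (tendsto_pow_atTop two_ne_zero).comp h1
      exact Tendsto.div_atTop tendsto_const_nhds h2
  obtain ⟨L, hL⟩ := cauchySeq_tendsto_of_complete hcauchy
  exact ⟨L, (tendsto_add_atTop_iff_nat 1).mp hL⟩


end Winding
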